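/- Let p be a prime, k ≥ 1 a natural number, and n a natural number with p^k ∣ n. Then for every j with 1 ≤ j ≤ n − 1, the number p^(k+1) divides C(n, j) · p^(n−j), where C(n, j) is the binomial coefficient. -/

import Mathlib

/-- If `p` is prime, `k ≥ 1`, `p^k ∣ n`, and `1 ≤ j ≤ n - 1`, then
`p^(k+1) ∣ C(n, j) · p^(n-j)`. -/
theorem stmt_2 (p k n j : ℕ) (hp : p.Prime) (hk : 1 ≤ k) (hdvd : p ^ k ∣ n)
    (hj : 1 ≤ j) (hjn : j ≤ n - 1) :
    p ^ (k + 1) ∣ Nat.choose n j * p ^ (n - j) := by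
  have hn : 2 ≤ n := by
    rcases Nat.lt_or_ge n 2 with h | h
    · interval_cases n <;> omega
    · exact h
  have hjltn : j < n := by omega
  have hCpos : 0 < Nat.choose n j := Nat.choose_pos hjltn.le
  have hppos : 0 < p := hp.pos
  set t := j.factorization p with ht
  set vC := (Nat.choose n j).factorization p with hvC
  set m := min t k with hm
  -- p^k ∣ j * C(n,j)
  have hid : n * Nat.choose (n - 1) (j - 1) = Nat.choose n j * j := by
    have := Nat.add_one_mul_choose_eq (n - 1) (j - 1)
    have h1 : n - 1 + 1 = n := by omega
    have h2 : j - 1 + 1 = j := by omega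
    rwa [h1, h2] at this
  have hdvd1 : p ^ k ∣ Nat.choose n j * j := by
    rw [← hid]; exact hdvd.mul_right _
  have hkle : k ≤ vC + t := by
    have hne : Nat.choose n j * j ≠ 0 := by positivity
    have := (Nat.Prime.pow_dvd_iff_le_factorization hp hne).mp hdvd1
    rwa [Nat.factorization_mul (by omega) (by omega), Finsupp.add_apply] at this
  -- p^m ∣ n - j
  have hpm_j : p ^ m ∣ j := dvd_trans (pow_dvd_pow p (min_le_left t k)) (Nat.ordProj_dvd j p)
  have hpm_n : p ^ m ∣ n := dvd_trans (pow_dvd_pow p (min_le_right t k)) hdvd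
  have hpm_nj : p ^ m ∣ n - j := Nat.dvd_sub hpm_n hpm_j
  have hnj : m + 1 ≤ n - j := by
    have hle : p ^ m ≤ n - j := Nat.le_of_dvd (by omega) hpm_nj
    have h2m : m < 2 ^ m := Nat.lt_two_pow_self
    have : 2 ^ m ≤ p ^ m := Nat.pow_le_pow_left hp.two_le m
    omega
  -- conclude
  have hne : Nat.choose n j * p ^ (n - j) ≠ 0 := by positivity
  rw [Nat.Prime.pow_dvd_iff_le_factorization hp hne,
    Nat.factorization_mul (by omega) (by positivity), Finsupp.add_apply,
    Nat.Prime.factorization_pow hp, Finsupp.single_apply, if_pos rfl]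
  omega
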